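/- Let U ⊆ ℝ² be open with coordinates (t,x), let v, k : U → ℝ be twice continuously differentiable, let λ, σ : U → ℝ be functions, and assume that on U: v(t,x) ≠ 0, ∂ₓv = v²kσ, ∂ₜv − ∂ₓ²v = −vk² − 2(∂ₓv)²/v + λ∂ₓv, and ∂ₜk − ∂ₓ²k = λ∂ₓk + k³. Then on U one has the identity ∂ₜ(vk) − ∂ₓ²(vk) = (λ − 2vkσ)·∂ₓ(vk). -/

import Mathlib

/-- Partial derivative with respect to the first coordinate `t` of a function of `(t,x)`. -/
noncomputable def pdt (g : ℝ × ℝ → ℝ) (p : ℝ × ℝ) : ℝ :=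
  deriv (fun t => g (t, p.2)) p.1

/-- Partial derivative with respect to the second coordinate `x` of a function of `(t,x)`. -/
noncomputable def pdx (g : ℝ × ℝ → ℝ) (p : ℝ × ℝ) : ℝ :=
  deriv (fun x => g (p.1, x)) p.2

private lemma aux_deriv_diff {f : ℝ → ℝ} {x : ℝ} (h : ContDiffAt ℝ 2 f x) :
    DifferentiableAt ℝ (deriv f) x := by
  have h1 : ContDiffAt ℝ 1 (fderiv ℝ f) x := h.fderiv_right (by norm_num)
  have h2 : DifferentiableAt ℝ (fun y => fderiv ℝ f y 1) x :=
    (h1.differentiableAt (by norm_num)).clm_apply (differentiableAt_const _)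
  exact h2

/-- If `v ≠ 0`, `∂ₓv = v²kσ`, and `v`, `k` satisfy the stated drift heat equations on an open set
`U`, then `vk` satisfies a drift heat equation with no zeroth-order term:
`∂ₜ(vk) − ∂ₓ²(vk) = (λ − 2vkσ)·∂ₓ(vk)` on `U`. -/
theorem stmt11 (U : Set (ℝ × ℝ)) (hU : IsOpen U) (v k lam sig : ℝ × ℝ → ℝ)
    (hv : ContDiffOn ℝ 2 v U) (hk : ContDiffOn ℝ 2 k U)
    (hv0 : ∀ p ∈ U, v p ≠ 0)
    (hvx : ∀ p ∈ U, pdx v p = (v p) ^ 2 * k p * sig p)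
    (hveq : ∀ p ∈ U,
      pdt v p - pdx (pdx v) p = -(v p) * (k p) ^ 2 - 2 * (pdx v p) ^ 2 / v p + lam p * pdx v p)
    (hkeq : ∀ p ∈ U, pdt k p - pdx (pdx k) p = lam p * pdx k p + (k p) ^ 3) :
    ∀ p ∈ U,
      pdt (fun q => v q * k q) p - pdx (pdx (fun q => v q * k q)) p
        = (lam p - 2 * v p * k p * sig p) * pdx (fun q => v q * k q) p := by
  intro p hp
  -- ContDiffAt facts in the plane
  have hvC : ∀ q ∈ U, ContDiffAt ℝ 2 v q := fun q hq => hv.contDiffAt (hU.mem_nhds hq)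
  have hkC : ∀ q ∈ U, ContDiffAt ℝ 2 k q := fun q hq => hk.contDiffAt (hU.mem_nhds hq)
  -- slices in x
  set V : ℝ → ℝ := fun x => v (p.1, x) with hV
  set K : ℝ → ℝ := fun x => k (p.1, x) with hK
  have hslice : ContDiff ℝ 2 (fun x : ℝ => ((p.1, x) : ℝ × ℝ)) :=
    (contDiff_const.prodMk contDiff_id)
  have hVC : ∀ x, (p.1, x) ∈ U → ContDiffAt ℝ 2 V x := fun x hx =>
    (hvC _ hx).comp x (hslice.contDiffAt)
  have hKC : ∀ x, (p.1, x) ∈ U → ContDiffAt ℝ 2 K x := fun x hx =>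
    (hkC _ hx).comp x (hslice.contDiffAt)
  have hp2 : p.2 ∈ {x : ℝ | (p.1, x) ∈ U} := hp
  have hWopen : IsOpen {x : ℝ | (p.1, x) ∈ U} :=
    hU.preimage (by continuity)
  have hWnhds : {x : ℝ | (p.1, x) ∈ U} ∈ nhds p.2 := hWopen.mem_nhds hp2
  -- slices in t
  have hsliceT : ContDiff ℝ 2 (fun t : ℝ => ((t, p.2) : ℝ × ℝ)) :=
    (contDiff_id.prodMk contDiff_const)
  have hVT : DifferentiableAt ℝ (fun t => v (t, p.2)) p.1 :=
    ((hvC p hp).comp p.1 hsliceT.contDiffAt).differentiableAt (by norm_num)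
  have hKT : DifferentiableAt ℝ (fun t => k (t, p.2)) p.1 :=
    ((hkC p hp).comp p.1 hsliceT.contDiffAt).differentiableAt (by norm_num)
  -- first derivative product rules
  have hpdt : pdt (fun q => v q * k q) p = pdt v p * k p + v p * pdt k p := by
    have := deriv_fun_mul hVT hKT
    simpa [pdt] using this
  have hpdx1 : ∀ x, (p.1, x) ∈ U →
      deriv (fun y => v (p.1, y) * k (p.1, y)) x = deriv V x * K x + V x * deriv K x := by
    intro x hx
    exact deriv_mul ((hVC x hx).differentiableAt (by norm_num))
      ((hKC x hx).differentiableAt (by norm_num))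
  have hpdx : pdx (fun q => v q * k q) p = pdx v p * k p + v p * pdx k p := by
    simpa [pdx] using hpdx1 p.2 hp
  -- second derivative in x
  have hEq : (deriv fun y => v (p.1, y) * k (p.1, y)) =ᶠ[nhds p.2]
      fun x => deriv V x * K x + V x * deriv K x := by
    filter_upwards [hWnhds] with x hx
    exact hpdx1 x hx
  have hVd : DifferentiableAt ℝ (deriv V) p.2 := aux_deriv_diff (hVC p.2 hp)
  have hKd : DifferentiableAt ℝ (deriv K) p.2 := aux_deriv_diff (hKC p.2 hp)
  have hV1 : DifferentiableAt ℝ V p.2 := (hVC p.2 hp).differentiableAt (by norm_num)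
  have hK1 : DifferentiableAt ℝ K p.2 := (hKC p.2 hp).differentiableAt (by norm_num)
  have hpdxx : pdx (pdx (fun q => v q * k q)) p
      = pdx (pdx v) p * k p + 2 * pdx v p * pdx k p + v p * pdx (pdx k) p := by
    have h1 : pdx (pdx (fun q => v q * k q)) p
        = deriv (deriv (fun y => v (p.1, y) * k (p.1, y))) p.2 := rfl
    rw [h1, hEq.deriv_eq]
    rw [deriv_fun_add (f := fun x => deriv V x * K x) (g := fun x => V x * deriv K x) (hVd.mul hK1) (hV1.mul hKd), deriv_fun_mul hVd hK1, deriv_fun_mul hV1 hKd]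
    have hv2 : pdx (pdx v) p = deriv (deriv V) p.2 := rfl
    have hk2 : pdx (pdx k) p = deriv (deriv K) p.2 := rfl
    have hv1 : pdx v p = deriv V p.2 := rfl
    have hk1 : pdx k p = deriv K p.2 := rfl
    have hvp : v p = V p.2 := rfl
    have hkp : k p = K p.2 := rfl
    rw [hv2, hk2, hv1, hk1, hvp, hkp]; ring
  -- algebra
  have e1 := hveq p hp
  have e2 := hkeq p hp
  have e3 := hvx p hp
  have e0 := hv0 p hp
  rw [hpdt, hpdx, hpdxx]
  have h4 : pdt v p = pdx (pdx v) p
      + (-(v p) * (k p) ^ 2 - 2 * (pdx v p) ^ 2 / v p + lam p * pdx v p) := by linarith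
  have h5 : pdt k p = pdx (pdx k) p + (lam p * pdx k p + (k p) ^ 3) := by linarith
  rw [h4, h5, e3]
  field_simp
  ring
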